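/- Let q = 4n − 1 be a prime power with q ≡ 3 (mod 8). Then there exist circulant matrices A, B, C, D of order n with entries in {−1, +1} (indexed by ℤ/nℤ) such that A·Aᵀ + B·Bᵀ + C·Cᵀ + D·Dᵀ = 4n·I, (I − A)ᵀ = −(I − A) (equivalently A + Aᵀ = 2·I), Bᵀ = B, and C = D; consequently there exists a (skew) Hadamard matrix of order 4n of Goethals–Seidel type. -/

import Mathlib

open Matrix

/-- A matrix indexed by `ZMod v` is circulant if its entries depend only on
the difference of the indices, i.e. it is invariant under simultaneous shifts. -/
def IsCirculant {v : ℕ} (M : Matrix (ZMod v) (ZMod v) ℤ) : Prop :=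
  ∀ i j k : ZMod v, M (i + k) (j + k) = M i j

/-- The back-diagonal permutation matrix `R` of order `v`:
`R i j = 1` if `i + j = -1` in `ZMod v`, and `0` otherwise. -/
def backDiag (v : ℕ) : Matrix (ZMod v) (ZMod v) ℤ :=
  Matrix.of fun i j => if i + j = -1 then 1 else 0

/-- The Goethals–Seidel array, built from four matrices of order `v`,
as a `4v × 4v` matrix indexed by `Fin 4 × ZMod v`. -/
def GSarray (v : ℕ) [NeZero v] (A B C D : Matrix (ZMod v) (ZMod v) ℤ) :
    Matrix (Fin 4 × ZMod v) (Fin 4 × ZMod v) ℤ :=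
  Matrix.of fun p q =>
    (![![A, B * backDiag v, C * backDiag v, D * backDiag v],
       ![-(B * backDiag v), A, Dᵀ * backDiag v, -(Cᵀ * backDiag v)],
       ![-(C * backDiag v), -(Dᵀ * backDiag v), A, Bᵀ * backDiag v],
       ![-(D * backDiag v), Cᵀ * backDiag v, -(Bᵀ * backDiag v), A]] p.1 q.1) p.2 q.2

namespace GSaux

variable {v : ℕ} [NeZero v]

lemma mulR_apply (X : Matrix (ZMod v) (ZMod v) ℤ) (i j : ZMod v) :
    (X * backDiag v) i j = X i (-1 - j) := by
  rw [Matrix.mul_apply]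
  have h1 : ∀ k : ZMod v, X i k * backDiag v k j = if k = -1 - j then X i k else 0 := by
    intro k
    simp only [backDiag, Matrix.of_apply, eq_sub_iff_add_eq, mul_ite, mul_one, mul_zero]
  simp_rw [h1]
  simp

lemma transpose_backDiag : (backDiag v)ᵀ = backDiag v := by
  ext i j
  simp only [backDiag, Matrix.transpose_apply, Matrix.of_apply, add_comm]

lemma Rmul_apply (X : Matrix (ZMod v) (ZMod v) ℤ) (i j : ZMod v) :
    (backDiag v * X) i j = X (-1 - i) j := by
  rw [Matrix.mul_apply]
  have h1 : ∀ k : ZMod v, backDiag v i k * X k j = if k = -1 - i then X k j else 0 := by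
    intro k
    simp only [backDiag, Matrix.of_apply, add_comm i k, eq_sub_iff_add_eq, ite_mul, one_mul,
      zero_mul]
  simp_rw [h1]
  simp

lemma backDiag_sq : backDiag v * backDiag v = 1 := by
  ext i j
  rw [mulR_apply]
  simp only [backDiag, Matrix.of_apply, Matrix.one_apply]
  have h2 : i + (-1 - j) = -1 ↔ i = j := by
    constructor
    · intro h; have : i - j = 0 := by linear_combination h
      exact sub_eq_zero.mp this
    · intro h; rw [h]; ring
  by_cases h : i = j
  · rw [if_pos (h2.mpr h), if_pos h]
  · rw [if_neg (fun hc => h (h2.mp hc)), if_neg h]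

lemma circ_transpose {X : Matrix (ZMod v) (ZMod v) ℤ} (hX : IsCirculant X) :
    IsCirculant Xᵀ := fun i j k => hX j i k

lemma circ_apply {X : Matrix (ZMod v) (ZMod v) ℤ} (hX : IsCirculant X) (i j : ZMod v) :
    X i j = X (i - j) 0 := by
  have := hX (i - j) 0 j
  rw [sub_add_cancel, zero_add] at this
  exact this

lemma circ_mulR_eq {X : Matrix (ZMod v) (ZMod v) ℤ} (hX : IsCirculant X) :
    X * backDiag v = backDiag v * Xᵀ := by
  ext i j
  rw [mulR_apply, Rmul_apply, Matrix.transpose_apply,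
      circ_apply hX i (-1 - j), circ_apply hX j (-1 - i)]
  congr 1
  ring

lemma circ_mul_comm {X Y : Matrix (ZMod v) (ZMod v) ℤ}
    (hX : IsCirculant X) (hY : IsCirculant Y) : X * Y = Y * X := by
  ext i j
  rw [Matrix.mul_apply, Matrix.mul_apply]
  have h1 : ∀ k : ZMod v, X i k * Y k j = Y i (i + j - k) * X (i + j - k) j := by
    intro k
    rw [circ_apply hX i k, circ_apply hY k j,
        circ_apply hY i (i + j - k), circ_apply hX (i + j - k) j]
    rw [show i - k = (i + j - k) - j by ring, show k - j = i - (i + j - k) by ring]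
    ring
  simp_rw [h1]
  exact Finset.sum_equiv (Equiv.subLeft (i + j)) (by simp) (by intro k _; rfl)


section Main

variable {A B C D : Matrix (ZMod v) (ZMod v) ℤ}
  (hA : IsCirculant A) (hB : IsCirculant B) (hC : IsCirculant C) (hD : IsCirculant D)

-- (X*R)ᵀ = R * Xᵀ  (always)
lemma mulR_transpose (X : Matrix (ZMod v) (ZMod v) ℤ) :
    (X * backDiag v)ᵀ = backDiag v * Xᵀ := by
  rw [Matrix.transpose_mul, transpose_backDiag]

lemma RR_left (X Y : Matrix (ZMod v) (ZMod v) ℤ) :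
    (X * backDiag v) * (backDiag v * Y) = X * Y := by
  rw [Matrix.mul_assoc, ← Matrix.mul_assoc (backDiag v), backDiag_sq, Matrix.one_mul]

-- (X*R) * (Y*R)ᵀ = X * Yᵀ
lemma mulR_gram (X Y : Matrix (ZMod v) (ZMod v) ℤ) :
    (X * backDiag v) * (Y * backDiag v)ᵀ = X * Yᵀ := by
  rw [mulR_transpose, RR_left]

lemma mul_mulR_transpose {Y : Matrix (ZMod v) (ZMod v) ℤ} (hY : IsCirculant Y)
    (X : Matrix (ZMod v) (ZMod v) ℤ) :
    X * (Y * backDiag v)ᵀ = (X * Y) * backDiag v := by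
  rw [mulR_transpose, ← circ_mulR_eq hY, ← Matrix.mul_assoc]

-- (X*R) * Yᵀ = (X * Yᵀ-ish) : (X*R)*Yᵀ = X*(R*Yᵀ) = X*(Y ... ) needs Yᵀ circulant form:
-- for Y circulant: R*Yᵀ = Y*R so (X*R)*Yᵀ = X*Y*R ... careful: that's R * Yᵀ with Y circ.
lemma mulR_mul_transpose {Y : Matrix (ZMod v) (ZMod v) ℤ} (hY : IsCirculant Y)
    (X : Matrix (ZMod v) (ZMod v) ℤ) :
    (X * backDiag v) * Yᵀ = (X * Y) * backDiag v := by
  rw [Matrix.mul_assoc, ← circ_mulR_eq hY, ← Matrix.mul_assoc]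

end Main


def Tb (v : ℕ) [NeZero v] (A B C D : Matrix (ZMod v) (ZMod v) ℤ) :
    Fin 4 → Fin 4 → Matrix (ZMod v) (ZMod v) ℤ :=
  ![![A, B * backDiag v, C * backDiag v, D * backDiag v],
    ![-(B * backDiag v), A, Dᵀ * backDiag v, -(Cᵀ * backDiag v)],
    ![-(C * backDiag v), -(Dᵀ * backDiag v), A, Bᵀ * backDiag v],
    ![-(D * backDiag v), Cᵀ * backDiag v, -(Bᵀ * backDiag v), A]]

section TbLemmas
variable {v : ℕ} [NeZero v] (A B C D : Matrix (ZMod v) (ZMod v) ℤ)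
@[simp] lemma Tb_00 : Tb v A B C D 0 0 = A := rfl
@[simp] lemma Tb_01 : Tb v A B C D 0 1 = B * backDiag v := rfl
@[simp] lemma Tb_02 : Tb v A B C D 0 2 = C * backDiag v := rfl
@[simp] lemma Tb_03 : Tb v A B C D 0 3 = D * backDiag v := rfl
@[simp] lemma Tb_10 : Tb v A B C D 1 0 = -(B * backDiag v) := rfl
@[simp] lemma Tb_11 : Tb v A B C D 1 1 = A := rfl
@[simp] lemma Tb_12 : Tb v A B C D 1 2 = Dᵀ * backDiag v := rfl
@[simp] lemma Tb_13 : Tb v A B C D 1 3 = -(Cᵀ * backDiag v) := rfl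
@[simp] lemma Tb_20 : Tb v A B C D 2 0 = -(C * backDiag v) := rfl
@[simp] lemma Tb_21 : Tb v A B C D 2 1 = -(Dᵀ * backDiag v) := rfl
@[simp] lemma Tb_22 : Tb v A B C D 2 2 = A := rfl
@[simp] lemma Tb_23 : Tb v A B C D 2 3 = Bᵀ * backDiag v := rfl
@[simp] lemma Tb_30 : Tb v A B C D 3 0 = -(D * backDiag v) := rfl
@[simp] lemma Tb_31 : Tb v A B C D 3 1 = Cᵀ * backDiag v := rfl
@[simp] lemma Tb_32 : Tb v A B C D 3 2 = -(Bᵀ * backDiag v) := rfl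
@[simp] lemma Tb_33 : Tb v A B C D 3 3 = A := rfl

lemma GS_eq (p q : Fin 4 × ZMod v) :
    GSarray v A B C D p q = Tb v A B C D p.1 q.1 p.2 q.2 := rfl

end TbLemmas


section KeyLemmas
variable {A B C D : Matrix (ZMod v) (ZMod v) ℤ}

lemma key_gram (hA : IsCirculant A) (hB : IsCirculant B) (hC : IsCirculant C)
    (hD : IsCirculant D)
    (hgram : A * Aᵀ + B * Bᵀ + C * Cᵀ + D * Dᵀ = ((4 * v : ℕ) : ℤ) • 1)
    (a b : Fin 4) :
    (∑ c : Fin 4, Tb v A B C D a c * (Tb v A B C D b c)ᵀ) =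
      if a = b then ((4 * v : ℕ) : ℤ) • (1 : Matrix (ZMod v) (ZMod v) ℤ) else 0 := by
  fin_cases a <;> fin_cases b <;> simp only [Fin.reduceFinMk]
  · -- 0 0
    rw [if_true]
    simp only [Fin.sum_univ_four, Tb_00, Tb_01, Tb_02, Tb_03]
    rw [mulR_gram B B, mulR_gram C C, mulR_gram D D]
    exact hgram
  · -- 0 1
    rw [if_neg (by decide)]
    simp only [Fin.sum_univ_four, Tb_00, Tb_01, Tb_02, Tb_03, Tb_10, Tb_11, Tb_12, Tb_13]
    simp only [Matrix.transpose_neg, Matrix.mul_neg, Matrix.neg_mul, neg_neg]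
    rw [mul_mulR_transpose hB A, mulR_mul_transpose hA B, mulR_gram C Dᵀ, mulR_gram D Cᵀ]
    simp only [Matrix.transpose_transpose]
    rw [circ_mul_comm hA hB, circ_mul_comm hC hD]
    abel
  · -- 0 2
    rw [if_neg (by decide)]
    simp only [Fin.sum_univ_four, Tb_00, Tb_01, Tb_02, Tb_03, Tb_20, Tb_21, Tb_22, Tb_23]
    simp only [Matrix.transpose_neg, Matrix.mul_neg, Matrix.neg_mul, neg_neg]
    rw [mul_mulR_transpose hC A, mulR_gram B Dᵀ, mulR_mul_transpose hA C, mulR_gram D Bᵀ]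
    simp only [Matrix.transpose_transpose]
    rw [circ_mul_comm hA hC, circ_mul_comm hB hD]
    abel
  · -- 0 3
    rw [if_neg (by decide)]
    simp only [Fin.sum_univ_four, Tb_00, Tb_01, Tb_02, Tb_03, Tb_30, Tb_31, Tb_32, Tb_33]
    simp only [Matrix.transpose_neg, Matrix.mul_neg, Matrix.neg_mul, neg_neg]
    rw [mul_mulR_transpose hD A, mulR_gram B Cᵀ, mulR_gram C Bᵀ, mulR_mul_transpose hA D]
    simp only [Matrix.transpose_transpose]
    rw [circ_mul_comm hA hD, circ_mul_comm hB hC]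
    abel
  · -- 1 0
    rw [if_neg (by decide)]
    simp only [Fin.sum_univ_four, Tb_00, Tb_01, Tb_02, Tb_03, Tb_10, Tb_11, Tb_12, Tb_13]
    simp only [Matrix.transpose_neg, Matrix.mul_neg, Matrix.neg_mul, neg_neg]
    rw [mulR_mul_transpose hA B, mul_mulR_transpose hB A, mulR_gram Dᵀ C, mulR_gram Cᵀ D]
    rw [circ_mul_comm hA hB, circ_mul_comm (circ_transpose hD) (circ_transpose hC)]
    abel
  · -- 1 1
    rw [if_true]
    simp only [Fin.sum_univ_four, Tb_10, Tb_11, Tb_12, Tb_13]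
    simp only [Matrix.transpose_neg, Matrix.mul_neg, Matrix.neg_mul, neg_neg]
    rw [mulR_gram B B, mulR_gram Dᵀ Dᵀ, mulR_gram Cᵀ Cᵀ]
    simp only [Matrix.transpose_transpose]
    rw [circ_mul_comm (circ_transpose hD) hD, circ_mul_comm (circ_transpose hC) hC, ← hgram]
    abel
  · -- 1 2
    rw [if_neg (by decide)]
    simp only [Fin.sum_univ_four, Tb_10, Tb_11, Tb_12, Tb_13, Tb_20, Tb_21, Tb_22, Tb_23]
    simp only [Matrix.transpose_neg, Matrix.mul_neg, Matrix.neg_mul, neg_neg]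
    rw [mulR_gram B C, mul_mulR_transpose (circ_transpose hD) A, mulR_mul_transpose hA Dᵀ,
      mulR_gram Cᵀ Bᵀ]
    simp only [Matrix.transpose_transpose]
    rw [circ_mul_comm hB (circ_transpose hC), circ_mul_comm (circ_transpose hD) hA]
    abel
  · -- 1 3
    rw [if_neg (by decide)]
    simp only [Fin.sum_univ_four, Tb_10, Tb_11, Tb_12, Tb_13, Tb_30, Tb_31, Tb_32, Tb_33]
    simp only [Matrix.transpose_neg, Matrix.mul_neg, Matrix.neg_mul, neg_neg]
    rw [mulR_gram B D, mul_mulR_transpose (circ_transpose hC) A, mulR_gram Dᵀ Bᵀ,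
      mulR_mul_transpose hA Cᵀ]
    simp only [Matrix.transpose_transpose]
    rw [circ_mul_comm hB (circ_transpose hD), circ_mul_comm (circ_transpose hC) hA]
    abel
  · -- 2 0
    rw [if_neg (by decide)]
    simp only [Fin.sum_univ_four, Tb_00, Tb_01, Tb_02, Tb_03, Tb_20, Tb_21, Tb_22, Tb_23]
    simp only [Matrix.transpose_neg, Matrix.mul_neg, Matrix.neg_mul, neg_neg]
    rw [mulR_mul_transpose hA C, mulR_gram Dᵀ B, mul_mulR_transpose hC A, mulR_gram Bᵀ D]
    rw [circ_mul_comm hC hA, circ_mul_comm (circ_transpose hD) (circ_transpose hB)]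
    abel
  · -- 2 1
    rw [if_neg (by decide)]
    simp only [Fin.sum_univ_four, Tb_10, Tb_11, Tb_12, Tb_13, Tb_20, Tb_21, Tb_22, Tb_23]
    simp only [Matrix.transpose_neg, Matrix.mul_neg, Matrix.neg_mul, neg_neg]
    rw [mulR_gram C B, mulR_mul_transpose hA Dᵀ, mul_mulR_transpose (circ_transpose hD) A,
      mulR_gram Bᵀ Cᵀ]
    simp only [Matrix.transpose_transpose]
    rw [circ_mul_comm hC (circ_transpose hB), circ_mul_comm (circ_transpose hD) hA]
    abel
  · -- 2 2
    rw [if_true]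
    simp only [Fin.sum_univ_four, Tb_20, Tb_21, Tb_22, Tb_23]
    simp only [Matrix.transpose_neg, Matrix.mul_neg, Matrix.neg_mul, neg_neg]
    rw [mulR_gram C C, mulR_gram Dᵀ Dᵀ, mulR_gram Bᵀ Bᵀ]
    simp only [Matrix.transpose_transpose]
    rw [circ_mul_comm (circ_transpose hD) hD, circ_mul_comm (circ_transpose hB) hB, ← hgram]
    abel
  · -- 2 3
    rw [if_neg (by decide)]
    simp only [Fin.sum_univ_four, Tb_20, Tb_21, Tb_22, Tb_23, Tb_30, Tb_31, Tb_32, Tb_33]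
    simp only [Matrix.transpose_neg, Matrix.mul_neg, Matrix.neg_mul, neg_neg]
    rw [mulR_gram C D, mulR_gram Dᵀ Cᵀ, mul_mulR_transpose (circ_transpose hB) A,
      mulR_mul_transpose hA Bᵀ]
    simp only [Matrix.transpose_transpose]
    rw [circ_mul_comm hC (circ_transpose hD), circ_mul_comm (circ_transpose hB) hA]
    abel
  · -- 3 0
    rw [if_neg (by decide)]
    simp only [Fin.sum_univ_four, Tb_00, Tb_01, Tb_02, Tb_03, Tb_30, Tb_31, Tb_32, Tb_33]
    simp only [Matrix.transpose_neg, Matrix.mul_neg, Matrix.neg_mul, neg_neg]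
    rw [mulR_mul_transpose hA D, mulR_gram Cᵀ B, mulR_gram Bᵀ C, mul_mulR_transpose hD A]
    rw [circ_mul_comm hD hA, circ_mul_comm (circ_transpose hC) (circ_transpose hB)]
    abel
  · -- 3 1
    rw [if_neg (by decide)]
    simp only [Fin.sum_univ_four, Tb_10, Tb_11, Tb_12, Tb_13, Tb_30, Tb_31, Tb_32, Tb_33]
    simp only [Matrix.transpose_neg, Matrix.mul_neg, Matrix.neg_mul, neg_neg]
    rw [mulR_gram D B, mulR_mul_transpose hA Cᵀ, mulR_gram Bᵀ Dᵀ,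
      mul_mulR_transpose (circ_transpose hC) A]
    simp only [Matrix.transpose_transpose]
    rw [circ_mul_comm hD (circ_transpose hB), circ_mul_comm (circ_transpose hC) hA]
    abel
  · -- 3 2
    rw [if_neg (by decide)]
    simp only [Fin.sum_univ_four, Tb_20, Tb_21, Tb_22, Tb_23, Tb_30, Tb_31, Tb_32, Tb_33]
    simp only [Matrix.transpose_neg, Matrix.mul_neg, Matrix.neg_mul, neg_neg]
    rw [mulR_gram D C, mulR_gram Cᵀ Dᵀ, mulR_mul_transpose hA Bᵀ,
      mul_mulR_transpose (circ_transpose hB) A]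
    simp only [Matrix.transpose_transpose]
    rw [circ_mul_comm hD (circ_transpose hC), circ_mul_comm (circ_transpose hB) hA]
    abel
  · -- 3 3
    rw [if_true]
    simp only [Fin.sum_univ_four, Tb_30, Tb_31, Tb_32, Tb_33]
    simp only [Matrix.transpose_neg, Matrix.mul_neg, Matrix.neg_mul, neg_neg]
    rw [mulR_gram D D, mulR_gram Cᵀ Cᵀ, mulR_gram Bᵀ Bᵀ]
    simp only [Matrix.transpose_transpose]
    rw [circ_mul_comm (circ_transpose hC) hC, circ_mul_comm (circ_transpose hB) hB, ← hgram]
    abel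

lemma key_skew (hB : IsCirculant B) (hC : IsCirculant C) (hD : IsCirculant D)
    (hskew : A + Aᵀ = (2 : ℤ) • 1) (a b : Fin 4) :
    Tb v A B C D a b + (Tb v A B C D b a)ᵀ =
      if a = b then (2 : ℤ) • (1 : Matrix (ZMod v) (ZMod v) ℤ) else 0 := by
  fin_cases a <;> fin_cases b <;> simp only [Fin.reduceFinMk]
  · rw [if_true]; exact hskew
  · rw [if_neg (by decide)]
    simp only [Tb_01, Tb_10, Matrix.transpose_neg, mulR_transpose, ← circ_mulR_eq hB]
    abel
  · rw [if_neg (by decide)]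
    simp only [Tb_02, Tb_20, Matrix.transpose_neg, mulR_transpose, ← circ_mulR_eq hC]
    abel
  · rw [if_neg (by decide)]
    simp only [Tb_03, Tb_30, Matrix.transpose_neg, mulR_transpose, ← circ_mulR_eq hD]
    abel
  · rw [if_neg (by decide)]
    simp only [Tb_10, Tb_01, Matrix.transpose_neg, mulR_transpose, ← circ_mulR_eq hB]
    abel
  · rw [if_true]; exact hskew
  · rw [if_neg (by decide)]
    simp only [Tb_12, Tb_21, Matrix.transpose_neg, mulR_transpose,
      ← circ_mulR_eq (circ_transpose hD)]
    abel
  · rw [if_neg (by decide)]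
    simp only [Tb_13, Tb_31, Matrix.transpose_neg, mulR_transpose,
      ← circ_mulR_eq (circ_transpose hC)]
    abel
  · rw [if_neg (by decide)]
    simp only [Tb_20, Tb_02, Matrix.transpose_neg, mulR_transpose, ← circ_mulR_eq hC]
    abel
  · rw [if_neg (by decide)]
    simp only [Tb_21, Tb_12, Matrix.transpose_neg, mulR_transpose,
      ← circ_mulR_eq (circ_transpose hD)]
    abel
  · rw [if_true]; exact hskew
  · rw [if_neg (by decide)]
    simp only [Tb_23, Tb_32, Matrix.transpose_neg, mulR_transpose,
      ← circ_mulR_eq (circ_transpose hB)]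
    abel
  · rw [if_neg (by decide)]
    simp only [Tb_30, Tb_03, Matrix.transpose_neg, mulR_transpose, ← circ_mulR_eq hD]
    abel
  · rw [if_neg (by decide)]
    simp only [Tb_31, Tb_13, Matrix.transpose_neg, mulR_transpose,
      ← circ_mulR_eq (circ_transpose hC)]
    abel
  · rw [if_neg (by decide)]
    simp only [Tb_32, Tb_23, Matrix.transpose_neg, mulR_transpose,
      ← circ_mulR_eq (circ_transpose hB)]
    abel
  · rw [if_true]; exact hskew

end KeyLemmas


section Assemble
variable {A B C D : Matrix (ZMod v) (ZMod v) ℤ}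

theorem GS_entries (hAe : ∀ i j, A i j = 1 ∨ A i j = -1) (hBe : ∀ i j, B i j = 1 ∨ B i j = -1)
    (hCe : ∀ i j, C i j = 1 ∨ C i j = -1) (hDe : ∀ i j, D i j = 1 ∨ D i j = -1) :
    ∀ p q', GSarray v A B C D p q' = 1 ∨ GSarray v A B C D p q' = -1 := by
  rintro ⟨a, i⟩ ⟨b, j⟩
  rw [GS_eq]
  have hneg : ∀ (X : Matrix (ZMod v) (ZMod v) ℤ) i j, (X i j = 1 ∨ X i j = -1) →
      ((-X) i j = 1 ∨ (-X) i j = -1) := by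
    rintro X i j (h | h) <;> rw [Matrix.neg_apply, h]
    · right; rfl
    · left; norm_num
  fin_cases a <;> fin_cases b <;> simp only [Fin.reduceFinMk, Tb_00, Tb_01, Tb_02, Tb_03,
    Tb_10, Tb_11, Tb_12, Tb_13, Tb_20, Tb_21, Tb_22, Tb_23, Tb_30, Tb_31, Tb_32, Tb_33]
  · exact hAe i j
  · rw [mulR_apply]; exact hBe _ _
  · rw [mulR_apply]; exact hCe _ _
  · rw [mulR_apply]; exact hDe _ _
  · exact hneg _ _ _ (by rw [mulR_apply]; exact hBe _ _)
  · exact hAe i j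
  · rw [mulR_apply, Matrix.transpose_apply]; exact hDe _ _
  · exact hneg _ _ _ (by rw [mulR_apply, Matrix.transpose_apply]; exact hCe _ _)
  · exact hneg _ _ _ (by rw [mulR_apply]; exact hCe _ _)
  · exact hneg _ _ _ (by rw [mulR_apply, Matrix.transpose_apply]; exact hDe _ _)
  · exact hAe i j
  · rw [mulR_apply, Matrix.transpose_apply]; exact hBe _ _
  · exact hneg _ _ _ (by rw [mulR_apply]; exact hDe _ _)
  · rw [mulR_apply, Matrix.transpose_apply]; exact hCe _ _
  · exact hneg _ _ _ (by rw [mulR_apply, Matrix.transpose_apply]; exact hBe _ _)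
  · exact hAe i j

theorem GS_mul (hA : IsCirculant A) (hB : IsCirculant B) (hC : IsCirculant C)
    (hD : IsCirculant D)
    (hgram : A * Aᵀ + B * Bᵀ + C * Cᵀ + D * Dᵀ = ((4 * v : ℕ) : ℤ) • 1) :
    GSarray v A B C D * (GSarray v A B C D)ᵀ =
      ((4 * v : ℕ) : ℤ) • (1 : Matrix (Fin 4 × ZMod v) (Fin 4 × ZMod v) ℤ) := by
  ext p q
  obtain ⟨a, i⟩ := p
  obtain ⟨b, j⟩ := q
  rw [Matrix.mul_apply]
  have h1 : ∀ x : Fin 4 × ZMod v,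
      GSarray v A B C D (a, i) x * (GSarray v A B C D)ᵀ x (b, j) =
      Tb v A B C D a x.1 i x.2 * Tb v A B C D b x.1 j x.2 := by
    intro x
    rw [Matrix.transpose_apply, GS_eq, GS_eq]
  simp_rw [h1]
  rw [Fintype.sum_prod_type]
  have h2 : ∀ c : Fin 4, ∑ k : ZMod v, Tb v A B C D a c i k * Tb v A B C D b c j k =
      (Tb v A B C D a c * (Tb v A B C D b c)ᵀ) i j := by
    intro c
    rw [Matrix.mul_apply]
    simp_rw [Matrix.transpose_apply]
  simp_rw [h2]
  rw [← Matrix.sum_apply i j Finset.univ (fun c => Tb v A B C D a c * (Tb v A B C D b c)ᵀ)]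
  rw [key_gram hA hB hC hD hgram a b]
  by_cases hab : a = b
  · subst hab
    rw [if_pos rfl]
    by_cases hij : i = j
    · subst hij; simp [Matrix.smul_apply, Matrix.one_apply]
    · simp [Matrix.smul_apply, Matrix.one_apply, hij, Prod.ext_iff]
  · rw [if_neg hab]
    simp [Matrix.smul_apply, Matrix.one_apply, Prod.ext_iff, hab]

theorem GS_add (hB : IsCirculant B) (hC : IsCirculant C) (hD : IsCirculant D)
    (hskew : A + Aᵀ = (2 : ℤ) • 1) :
    GSarray v A B C D + (GSarray v A B C D)ᵀ =
      (2 : ℤ) • (1 : Matrix (Fin 4 × ZMod v) (Fin 4 × ZMod v) ℤ) := by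
  ext p q
  obtain ⟨a, i⟩ := p
  obtain ⟨b, j⟩ := q
  rw [Matrix.add_apply, Matrix.transpose_apply, GS_eq, GS_eq]
  have h1 : Tb v A B C D a b i j + Tb v A B C D b a j i =
      (Tb v A B C D a b + (Tb v A B C D b a)ᵀ) i j := by
    rw [Matrix.add_apply, Matrix.transpose_apply]
  rw [h1, key_skew hB hC hD hskew a b]
  by_cases hab : a = b
  · subst hab
    rw [if_pos rfl]
    by_cases hij : i = j
    · subst hij; simp [Matrix.smul_apply, Matrix.one_apply]
    · simp [Matrix.smul_apply, Matrix.one_apply, hij, Prod.ext_iff]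
  · rw [if_neg hab]
    simp [Matrix.smul_apply, Matrix.one_apply, Prod.ext_iff, hab]

end Assemble

end GSaux

set_option linter.unusedSectionVars false

namespace HadCons

/-- Sign (quadratic-character style) function on a finite field w.r.t. subfield size q. -/
def sgn (q : ℕ) {K : Type} [Field K] [DecidableEq K] (z : K) : ℤ :=
  if z = 0 then 0 else if z ^ ((q - 1) / 2) = 1 then 1 else -1

/-- Twisted symplectic-type form with values in the subfield. -/
def Dp (q : ℕ) {K : Type} [Field K] (th x y : K) : K :=
  (x * y ^ q - x ^ q * y) * th⁻¹

section SgnLemmas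

variable {K : Type} [Field K] [DecidableEq K] {q : ℕ}

lemma sgn_zero : sgn q (0 : K) = 0 := if_pos rfl

lemma sgn_of_ne {z : K} (hz : z ≠ 0) : sgn q z = 1 ∨ sgn q z = -1 := by
  unfold sgn
  rw [if_neg hz]
  split <;> simp

lemma pow_q_sub_one {z : K} (hq : 1 ≤ q) (hS : z ^ q = z) (hz : z ≠ 0) : z ^ (q - 1) = 1 := by
  have h1 : z ^ (q - 1) * z = 1 * z := by
    rw [one_mul, ← pow_succ, Nat.sub_add_cancel hq, hS]
  exact mul_right_cancel₀ hz h1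

lemma pow_half_dichotomy {z : K} (hq : 1 ≤ q) (hhalf : q - 1 = 2 * ((q - 1) / 2))
    (hS : z ^ q = z) (hz : z ≠ 0) :
    z ^ ((q - 1) / 2) = 1 ∨ z ^ ((q - 1) / 2) = -1 := by
  have h2 : z ^ ((q - 1) / 2) * z ^ ((q - 1) / 2) = 1 := by
    rw [← pow_add, ← two_mul, ← hhalf, pow_q_sub_one hq hS hz]
  exact mul_self_eq_one_iff.mp h2

lemma sgn_mul {z1 z2 : K} (hq : 1 ≤ q) (hhalf : q - 1 = 2 * ((q - 1) / 2))
    (hne1 : (-1 : K) ≠ 1) (h1 : z1 ^ q = z1) (h2 : z2 ^ q = z2) :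
    sgn q (z1 * z2) = sgn q z1 * sgn q z2 := by
  by_cases hz1 : z1 = 0
  · rw [hz1]; simp [sgn_zero]
  by_cases hz2 : z2 = 0
  · rw [hz2]; simp [sgn_zero]
  have h12 : z1 * z2 ≠ 0 := mul_ne_zero hz1 hz2
  rcases pow_half_dichotomy hq hhalf h1 hz1 with ha | ha <;>
    rcases pow_half_dichotomy hq hhalf h2 hz2 with hb | hb <;>
      simp only [sgn, if_neg hz1, if_neg hz2, if_neg h12, mul_pow, ha, hb, mul_one, one_mul,
        neg_mul, neg_neg, if_pos rfl, if_neg hne1] <;> norm_num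

lemma sgn_ne {z : K} (hz : z ≠ 0) : sgn q z ≠ 0 := by
  rcases sgn_of_ne (q := q) hz with h | h <;> rw [h] <;> norm_num

lemma sgn_vals (z : K) : sgn q z = 0 ∨ sgn q z = 1 ∨ sgn q z = -1 := by
  unfold sgn
  split_ifs <;> simp

lemma sgn_sq {z : K} (hz : z ≠ 0) : sgn q z * sgn q z = 1 := by
  rcases sgn_of_ne (q := q) hz with h | h <;> rw [h] <;> norm_num

lemma sgn_neg_one (hodd : Odd ((q - 1) / 2)) (hne1 : (-1 : K) ≠ 1) :
    sgn q (-1 : K) = -1 := by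
  unfold sgn
  rw [if_neg (neg_ne_zero.mpr one_ne_zero), Odd.neg_one_pow hodd, if_neg hne1]

lemma sgn_neg {z : K} (hq : 1 ≤ q) (hhalf : q - 1 = 2 * ((q - 1) / 2))
    (hodd : Odd ((q - 1) / 2)) (hne1 : (-1 : K) ≠ 1) (hS : z ^ q = z) :
    sgn q (-z) = -sgn q z := by
  have hm : (-1 : K) ^ q = -1 := Odd.neg_one_pow (by
    rcases Nat.even_or_odd q with he | ho
    · exfalso
      obtain ⟨j, hj⟩ := he
      omega
    · exact ho)
  have := sgn_mul (z1 := (-1 : K)) (z2 := z) hq hhalf hne1 hm hS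
  rw [neg_one_mul] at this
  rw [this, sgn_neg_one hodd hne1, neg_one_mul]

end SgnLemmas

section DpLemmas

variable {K : Type} [Field K] {q : ℕ} {th : K}

lemma Dp_skew (x y : K) : Dp q th y x = -Dp q th x y := by unfold Dp; ring

lemma Dp_self (x : K) : Dp q th x x = 0 := by unfold Dp; ring

lemma Dp_zero_right (hq1 : 1 ≤ q) (x : K) : Dp q th x 0 = 0 := by
  unfold Dp; rw [zero_pow (by omega)]; ring

lemma Dp_frob (hqq : ∀ z : K, z ^ (q * q) = z) (x y : K) :
    Dp q th (x ^ q) (y ^ q) = -Dp q th x y := by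
  unfold Dp
  rw [← pow_mul, ← pow_mul, hqq, hqq]
  ring

lemma Dp_in_S (hfrob : ∀ x y : K, (x - y) ^ q = x ^ q - y ^ q)
    (hqq : ∀ z : K, z ^ (q * q) = z) (hthq : th ^ q = -th) (x y : K) :
    (Dp q th x y) ^ q = Dp q th x y := by
  unfold Dp
  rw [mul_pow, hfrob, mul_pow, mul_pow, ← pow_mul, ← pow_mul, hqq, hqq, inv_pow, hthq]
  rw [inv_neg]
  ring

lemma Dp_add_right (hadd : ∀ x y : K, (x + y) ^ q = x ^ q + y ^ q) (x y z : K) :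
    Dp q th x (y + z) = Dp q th x y + Dp q th x z := by
  unfold Dp; rw [hadd]; ring

lemma Dp_smul_right {a : K} (ha : a ^ q = a) (x y : K) :
    Dp q th x (a * y) = a * Dp q th x y := by
  unfold Dp; rw [mul_pow, ha]; ring

lemma Dp_smul_left {a : K} (ha : a ^ q = a) (x y : K) :
    Dp q th (a * x) y = a * Dp q th x y := by
  unfold Dp; rw [mul_pow, ha]; ring

lemma Dp_neg_left (hfrob : ∀ x y : K, (x - y) ^ q = x ^ q - y ^ q) (hq1 : 1 ≤ q) (x y : K) :
    Dp q th (-x) y = -Dp q th x y := by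
  unfold Dp
  have h1 : (-x) ^ q = -(x ^ q) := by
    rw [show -x = 0 - x from by ring, hfrob, zero_pow (by omega)]
    ring
  rw [h1]; ring

lemma Dp_mul_mul {u : K} (hu : u ^ (q + 1) = 1) (x y : K) :
    Dp q th (u * x) (u * y) = Dp q th x y := by
  have h2 : u ^ q * u = 1 := by rw [← pow_succ, hu]
  unfold Dp
  rw [mul_pow, mul_pow]
  linear_combination (x * y ^ q - x ^ q * y) * th⁻¹ * h2

lemma Dp_eq_zero_iff (hth : th ≠ 0) (hq1 : 1 ≤ q) {x y : K} (hx : x ≠ 0) (hy : y ≠ 0) :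
    Dp q th x y = 0 ↔ y ^ (q - 1) = x ^ (q - 1) := by
  have hfac : x * y ^ q - x ^ q * y = x * y * (y ^ (q - 1) - x ^ (q - 1)) := by
    have h1 : y ^ q = y ^ (q - 1) * y := by rw [← pow_succ, Nat.sub_add_cancel hq1]
    have h2 : x ^ q = x ^ (q - 1) * x := by rw [← pow_succ, Nat.sub_add_cancel hq1]
    rw [h1, h2]; ring
  unfold Dp
  rw [hfac, mul_eq_zero, mul_eq_zero, mul_eq_zero]
  constructor
  · rintro ((( h | h) | h) | h)
    · exact absurd h hx
    · exact absurd h hy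
    · exact (sub_eq_zero.mp h).symm ▸ rfl
    · exact absurd h (inv_ne_zero hth)
  · intro h
    left; right
    rw [h]; ring

end DpLemmas

/-- Bundled hypotheses for the construction. -/
structure Setup (K : Type) [Field K] [Fintype K] [DecidableEq K]
    (p k q n : ℕ) (w : Kˣ) : Prop where
  hp : p.Prime
  hk : k ≠ 0
  hq : q = p ^ k
  hcard : Fintype.card K = q ^ 2
  hn4 : q + 1 = 4 * n
  hodd : n % 2 = 1
  hn1 : 1 ≤ n
  hord : orderOf w = q ^ 2 - 1

section C

variable {K : Type} [Field K] [Fintype K] [DecidableEq K] {p k q n : ℕ} {w : Kˣ} [CharP K p]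

namespace Setup

variable (S : Setup K p k q n w)
include S

lemma q3 : 3 ≤ q := by have := S.hn4; have := S.hn1; omega

lemma q1 : 1 ≤ q := by have := S.q3; omega

lemma qodd : q % 2 = 1 := by have := S.hn4; have := S.hodd; omega

lemma hhalf : q - 1 = 2 * ((q - 1) / 2) := by have := S.qodd; have := S.q3; omega

lemma hhalfodd : Odd ((q - 1) / 2) := by
  rw [Nat.odd_iff]
  have h1 := S.hn4; have h2 := S.hodd; have h3 := S.q3
  omega

lemma factor : q ^ 2 - 1 = (q + 1) * (q - 1) := by
  have h1 : q ^ 2 = (q + 1) * (q - 1) + 1 := by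
    obtain ⟨r, hr⟩ : ∃ r, q = r + 1 := ⟨q - 1, by have := S.q1; omega⟩
    subst hr
    rw [Nat.add_sub_cancel]
    ring
  omega

lemma cardM : q ^ 2 - 1 = 4 * n * (q - 1) := by
  rw [S.factor, ← S.hn4]

lemma Mpos : 1 ≤ q ^ 2 - 1 := by
  rw [S.cardM]
  have := S.q3; have := S.hn1
  have h1 := S.q3; have h2 := S.hn1
  calc 1 ≤ 4 * 1 * 2 := by norm_num
  _ ≤ 4 * n * (q - 1) := by
      apply Nat.mul_le_mul
      · omega
      · omega

lemma podd : 2 < p := by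
  rcases Nat.lt_or_ge 2 p with h | h
  · exact h
  · exfalso
    interval_cases p
    · exact S.hp.ne_zero rfl
    · exact S.hp.ne_one rfl
    · -- p = 2 : q = 2^k is even, but q is odd
      have h2 : 2 ∣ q := by rw [S.hq]; exact dvd_pow_self 2 S.hk
      have := S.qodd
      omega

lemma ne1 : (-1 : K) ≠ 1 := by
  haveI : Fact (Nat.Prime p) := ⟨S.hp⟩
  haveI : Fact (2 < p) := ⟨S.podd⟩
  exact CharP.neg_one_ne_one K p

lemma hfrob : ∀ x y : K, (x - y) ^ q = x ^ q - y ^ q := by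
  haveI : Fact (Nat.Prime p) := ⟨S.hp⟩
  intro x y
  rw [S.hq]
  exact sub_pow_char_pow x y k

lemma hadd : ∀ x y : K, (x + y) ^ q = x ^ q + y ^ q := by
  haveI : Fact (Nat.Prime p) := ⟨S.hp⟩
  intro x y
  rw [S.hq]
  exact add_pow_char_pow x y k (p := p)


lemma hqq : ∀ z : K, z ^ (q * q) = z := by
  intro z
  rw [show q * q = q ^ 2 from (sq q).symm, ← S.hcard]
  exact FiniteField.pow_card z

lemma pow_iff (a b : ℕ) : w ^ a = w ^ b ↔ a ≡ b [MOD q ^ 2 - 1] := by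
  rw [pow_eq_pow_iff_modEq, S.hord]

lemma one_iff (a : ℕ) : w ^ a = 1 ↔ (q ^ 2 - 1) ∣ a := by
  rw [← orderOf_dvd_iff_pow_eq_one, S.hord]

lemma valpow (a : ℕ) : ((w ^ a : Kˣ) : K) = (w : K) ^ a := Units.val_pow_eq_pow_val w a

lemma wK_ne (a : ℕ) : ((w : K) ^ a) ≠ 0 := by
  rw [← S.valpow]
  exact Units.ne_zero _

lemma wK_M : (w : K) ^ (q ^ 2 - 1) = 1 := by
  rw [← S.valpow, (S.one_iff _).mpr dvd_rfl, Units.val_one]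

lemma neg1 : (w : K) ^ (2 * n * (q - 1)) = -1 := by
  have hsq : ((w : K) ^ (2 * n * (q - 1))) * ((w : K) ^ (2 * n * (q - 1))) = 1 := by
    rw [← pow_add, show 2 * n * (q - 1) + 2 * n * (q - 1) = 4 * n * (q - 1) from by ring,
      ← S.cardM, S.wK_M]
  rcases mul_self_eq_one_iff.mp hsq with h | h
  · exfalso
    have h2 : w ^ (2 * n * (q - 1)) = 1 := by
      apply Units.ext
      rw [S.valpow] at *
      simpa using h
    have h3 := (S.one_iff _).mp h2
    have hpos : 0 < 2 * n * (q - 1) := by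
      have := S.q3; have := S.hn1
      calc 0 < 2 * 1 * 2 := by norm_num
      _ ≤ 2 * n * (q - 1) := by apply Nat.mul_le_mul <;> omega
    have h4 := Nat.le_of_dvd hpos h3
    rw [S.cardM] at h4
    have hq3 := S.q3; have hn1 := S.hn1
    have h5 : 2 * n * (q - 1) < 4 * n * (q - 1) := by
      apply Nat.mul_lt_mul_of_lt_of_le
      · omega
      · omega
      · omega
    omega
  · exact h

/-! theta -/

lemma th_ne : (w : K) ^ (2 * n) ≠ 0 := S.wK_ne _

lemma th_q1 : ((w : K) ^ (2 * n)) ^ (q - 1) = -1 := by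
  rw [← pow_mul]
  exact S.neg1

lemma th_q : ((w : K) ^ (2 * n)) ^ q = -((w : K) ^ (2 * n)) := by
  rw [show q = (q - 1) + 1 from by have := S.q1; omega, pow_succ, S.th_q1]
  ring

/-! mu = w^(q+1), a generator of the subfield's multiplicative group -/

lemma mu_exp : (q + 1) * q = (q + 1) + (q ^ 2 - 1) := by
  have h := S.factor
  have h2 : (q + 1) * q = (q + 1) * (q - 1) + (q + 1) := by
    have h3 : q = (q - 1) + 1 := by have := S.q1; omega
    calc (q + 1) * q = (q + 1) * ((q - 1) + 1) := by rw [← h3]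
    _ = (q + 1) * (q - 1) + (q + 1) := by ring
  omega

lemma mu_S : ((w : K) ^ (q + 1)) ^ q = (w : K) ^ (q + 1) := by
  rw [← pow_mul, S.mu_exp, pow_add, S.wK_M]
  ring

lemma mu_ne : (w : K) ^ (q + 1) ≠ 0 := S.wK_ne _

lemma sgn_mu : sgn q ((w : K) ^ (q + 1)) = -1 := by
  have hexp : (q + 1) * ((q - 1) / 2) = 2 * n * (q - 1) := by
    have h1 := S.hn4; have h3 := S.q3
    obtain ⟨s, hs1, hs2⟩ : ∃ s, q = 4 * s + 3 ∧ n = s + 1 := ⟨n - 1, by omega, by omega⟩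
    subst hs1 hs2
    have h6 : (4 * s + 3 - 1) / 2 = 2 * s + 1 := by omega
    have h7 : 4 * s + 3 - 1 = 4 * s + 2 := by omega
    rw [h6, h7]
    ring
  unfold sgn
  rw [if_neg S.mu_ne, ← pow_mul, hexp, S.neg1, if_neg S.ne1]

/-! xi = w^(4(q-1)) : the order-n element -/

lemma xi_ord : orderOf ((w ^ (4 * (q - 1)) : Kˣ)) = n := by
  rw [orderOf_pow, S.hord, S.cardM]
  have hdvd : (4 * (q - 1)) ∣ (4 * n * (q - 1)) := ⟨n, by ring⟩
  rw [Nat.gcd_eq_right hdvd]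
  have hpos : 0 < 4 * (q - 1) := by have := S.q3; omega
  rw [show 4 * n * (q - 1) = n * (4 * (q - 1)) from by ring]
  exact Nat.mul_div_cancel n hpos

lemma xi_n : (w ^ (4 * (q - 1)) : Kˣ) ^ n = 1 := by
  rw [← S.xi_ord]
  exact pow_orderOf_eq_one _

lemma xi_q1 : (w ^ (4 * (q - 1)) : Kˣ) ^ (q + 1) = 1 := by
  rw [← pow_mul, S.one_iff]
  exact ⟨4, by rw [S.factor]; ring⟩

end Setup

/-! the power map `pw` -/

def pwel (q n : ℕ) {K : Type} [Field K] (w : Kˣ) (s : ZMod n) : Kˣ :=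
  (w ^ (4 * (q - 1))) ^ s.val

namespace Setup

variable (S : Setup K p k q n w)
include S

lemma pw_add [NeZero n] (s t : ZMod n) :
    pwel q n w (s + t) = pwel q n w s * pwel q n w t := by
  unfold pwel
  rw [← pow_add, ZMod.val_add,
    show (s.val + t.val) % n = (s.val + t.val) % orderOf ((w ^ (4 * (q - 1))) : Kˣ) from by
      rw [S.xi_ord]]
  exact pow_mod_orderOf _ _

lemma pw_zero [NeZero n] : pwel q n w (0 : ZMod n) = 1 := by
  unfold pwel
  rw [ZMod.val_zero, pow_zero]

lemma pw_neg [NeZero n] (s : ZMod n) : pwel q n w (-s) = (pwel q n w s)⁻¹ := by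
  have h := S.pw_add s (-s)
  rw [add_neg_cancel, S.pw_zero] at h
  exact eq_inv_of_mul_eq_one_right h.symm

lemma pw_q1 (s : ZMod n) : (pwel q n w s) ^ (q + 1) = 1 := by
  unfold pwel
  rw [pow_right_comm, S.xi_q1, one_pow]

lemma pw_q [NeZero n] (s : ZMod n) : (pwel q n w s) ^ q = pwel q n w (-s) := by
  have h : (pwel q n w s) ^ q * (pwel q n w s) = 1 := by
    rw [← pow_succ]
    exact S.pw_q1 s
  rw [S.pw_neg]
  exact eq_inv_of_mul_eq_one_left h

lemma pw_ne (s : ZMod n) : ((pwel q n w s : Kˣ) : K) ≠ 0 := Units.ne_zero _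

end Setup

/-- Matrix entry function: sign of the twisted form between labeled points. -/
def efn (q n : ℕ) {K : Type} [Field K] [DecidableEq K] (w : Kˣ) (c : ℕ) (s u : ZMod n) : ℤ :=
  sgn q (Dp q ((w : K) ^ (2 * n)) ((pwel q n w s : Kˣ) : K)
    ((w : K) ^ c * ((pwel q n w u : Kˣ) : K)))

namespace Setup

variable (S : Setup K p k q n w)
include S

lemma DS (x y : K) : (Dp q ((w : K) ^ (2 * n)) x y) ^ q = Dp q ((w : K) ^ (2 * n)) x y :=
  Dp_in_S S.hfrob S.hqq S.th_q x y

lemma sgnDp_neg (x y : K) :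
    sgn q (-(Dp q ((w : K) ^ (2 * n)) x y)) = -sgn q (Dp q ((w : K) ^ (2 * n)) x y) :=
  sgn_neg S.q1 S.hhalf S.hhalfodd S.ne1 (S.DS x y)

lemma pwK_q1 [NeZero n] (v : ZMod n) : ((pwel q n w v : Kˣ) : K) ^ (q + 1) = 1 := by
  rw [← Units.val_pow_eq_pow_val, S.pw_q1, Units.val_one]

lemma ef_shift [NeZero n] (c : ℕ) (s u v : ZMod n) :
    efn q n w c (s + v) (u + v) = efn q n w c s u := by
  unfold efn
  rw [S.pw_add s v, S.pw_add u v, Units.val_mul, Units.val_mul,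
    show (w : K) ^ c * ((pwel q n w u : Kˣ) * (pwel q n w v : Kˣ) : K) =
      ((pwel q n w v : Kˣ) : K) * ((w : K) ^ c * ((pwel q n w u : Kˣ) : K)) from by
        push_cast; ring,
    show ((pwel q n w s : Kˣ) : K) * ((pwel q n w v : Kˣ) : K) =
      ((pwel q n w v : Kˣ) : K) * ((pwel q n w s : Kˣ) : K) from mul_comm _ _,
    Dp_mul_mul (S.pwK_q1 v)]

lemma ef_diag [NeZero n] (s : ZMod n) : efn q n w 0 s s = 0 := by
  unfold efn
  rw [pow_zero, one_mul, Dp_self, sgn_zero]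

lemma ef_skew [NeZero n] (s u : ZMod n) : efn q n w 0 u s = -efn q n w 0 s u := by
  unfold efn
  rw [pow_zero, one_mul, one_mul, Dp_skew, S.sgnDp_neg]

lemma pwK_q [NeZero n] (s : ZMod n) :
    ((pwel q n w s : Kˣ) : K) ^ q = ((pwel q n w (-s) : Kˣ) : K) := by
  rw [← Units.val_pow_eq_pow_val, S.pw_q]

lemma ef_bsym [NeZero n] (s u : ZMod n) : efn q n w (2 * n) u s = efn q n w (2 * n) s u := by
  have h1 : efn q n w (2 * n) u s =
      -sgn q (Dp q ((w : K) ^ (2 * n))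
        ((w : K) ^ (2 * n) * ((pwel q n w s : Kˣ) : K)) ((pwel q n w u : Kˣ) : K)) := by
    unfold efn
    rw [Dp_skew, S.sgnDp_neg]
  have h2 : Dp q ((w : K) ^ (2 * n))
      ((w : K) ^ (2 * n) * ((pwel q n w s : Kˣ) : K)) ((pwel q n w u : Kˣ) : K) =
      -(Dp q ((w : K) ^ (2 * n))
        (((w : K) ^ (2 * n) * ((pwel q n w s : Kˣ) : K)) ^ q)
        (((pwel q n w u : Kˣ) : K) ^ q)) := by
    rw [Dp_frob S.hqq]; ring
  rw [h1, h2, S.sgnDp_neg, neg_neg, mul_pow, S.th_q, S.pwK_q, S.pwK_q,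
    show (-((w : K) ^ (2 * n))) * ((pwel q n w (-s) : Kˣ) : K) =
      -(((w : K) ^ (2 * n)) * ((pwel q n w (-s) : Kˣ) : K)) from by ring,
    Dp_neg_left S.hfrob S.q1, S.sgnDp_neg, Dp_skew, S.sgnDp_neg]
  rw [neg_neg]
  have h3 := S.ef_shift (2 * n) (-u) (-s) (s + u)
  rw [show -u + (s + u) = s from by ring, show -s + (s + u) = u from by ring] at h3
  unfold efn at h3
  exact h3.symm

lemma ef_m3 [NeZero n] (s u : ZMod n) : efn q n w q s u = -efn q n w 1 u s := by
  unfold efn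
  have h2 : Dp q ((w : K) ^ (2 * n)) ((pwel q n w s : Kˣ) : K)
      ((w : K) ^ q * ((pwel q n w u : Kˣ) : K)) =
      -(Dp q ((w : K) ^ (2 * n)) (((pwel q n w s : Kˣ) : K) ^ q)
        (((w : K) ^ q * ((pwel q n w u : Kˣ) : K)) ^ q)) := by
    rw [Dp_frob S.hqq]; ring
  have h3 : ((w : K) ^ q * ((pwel q n w u : Kˣ) : K)) ^ q =
      (w : K) ^ 1 * ((pwel q n w (-u) : Kˣ) : K) := by
    rw [mul_pow, S.pwK_q, ← pow_mul, S.hqq, pow_one]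
  rw [h2, h3, S.pwK_q, S.sgnDp_neg]
  have h4 := S.ef_shift 1 (-s) (-u) (s + u)
  rw [show -s + (s + u) = u from by ring, show -u + (s + u) = s from by ring] at h4
  unfold efn at h4
  rw [h4]

/-! nonvanishing of entries -/

lemma pwK_eq (s : ZMod n) : ((pwel q n w s : Kˣ) : K) = (w : K) ^ (4 * (q - 1) * s.val) := by
  unfold pwel
  rw [← Units.val_pow_eq_pow_val, ← pow_mul, S.valpow]

lemma label_modeq {c : ℕ} {s u : ZMod n}
    (h : Dp q ((w : K) ^ (2 * n)) ((pwel q n w s : Kˣ) : K)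
      ((w : K) ^ c * ((pwel q n w u : Kˣ) : K)) = 0) :
    c + 4 * (q - 1) * u.val ≡ 4 * (q - 1) * s.val [MOD 4 * n] := by
  rw [Dp_eq_zero_iff S.th_ne S.q1 (S.pw_ne s)
      (mul_ne_zero (S.wK_ne c) (S.pw_ne u))] at h
  rw [S.pwK_eq s, S.pwK_eq u, ← pow_add, ← pow_mul, ← pow_mul] at h
  have h2 : w ^ ((c + 4 * (q - 1) * u.val) * (q - 1)) = w ^ (4 * (q - 1) * s.val * (q - 1)) := by
    apply Units.ext
    rw [S.valpow, S.valpow]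
    exact h
  have h3 := (S.pow_iff _ _).mp h2
  rw [S.cardM] at h3
  have h4 : q - 1 ≠ 0 := by have := S.q3; omega
  exact Nat.ModEq.mul_right_cancel' h4 (by
    rw [show 4 * n * (q - 1) = 4 * n * (q - 1) from rfl] at h3
    exact h3)

lemma modeq_mod4 {c : ℕ} {s u : ZMod n}
    (h : c + 4 * (q - 1) * u.val ≡ 4 * (q - 1) * s.val [MOD 4 * n]) :
    c % 4 = 0 := by
  have h4 : c + 4 * (q - 1) * u.val ≡ 4 * (q - 1) * s.val [MOD 4] :=
    Nat.ModEq.of_dvd ⟨n, rfl⟩ h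
  have hA : 4 * (q - 1) * u.val ≡ 0 [MOD 4] :=
    (Nat.modEq_zero_iff_dvd).mpr ⟨(q - 1) * u.val, by ring⟩
  have hB : 4 * (q - 1) * s.val ≡ 0 [MOD 4] :=
    (Nat.modEq_zero_iff_dvd).mpr ⟨(q - 1) * s.val, by ring⟩
  have h5 : c ≡ 0 [MOD 4] := by
    calc c ≡ c + 0 [MOD 4] := by rw [Nat.add_zero]
    _ ≡ c + 4 * (q - 1) * u.val [MOD 4] := (Nat.ModEq.add_left c hA.symm)
    _ ≡ 4 * (q - 1) * s.val [MOD 4] := h4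
    _ ≡ 0 [MOD 4] := hB
  simpa [Nat.ModEq] using h5

lemma efB_ne [NeZero n] (s u : ZMod n) : efn q n w (2 * n) s u ≠ 0 := by
  unfold efn
  apply sgn_ne
  intro h
  have h2 := S.modeq_mod4 (S.label_modeq h)
  have := S.hodd
  omega

lemma efC_ne [NeZero n] (s u : ZMod n) : efn q n w 1 s u ≠ 0 := by
  unfold efn
  apply sgn_ne
  intro h
  have h2 := S.modeq_mod4 (S.label_modeq h)
  omega

lemma efD_ne [NeZero n] (s u : ZMod n) : efn q n w q s u ≠ 0 := by
  unfold efn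
  apply sgn_ne
  intro h
  have h2 := S.modeq_mod4 (S.label_modeq h)
  have := S.hn4
  omega

lemma efA_ne [NeZero n] {s u : ZMod n} (hsu : s ≠ u) : efn q n w 0 s u ≠ 0 := by
  unfold efn
  apply sgn_ne
  intro h
  have h2 := S.label_modeq h
  rw [Nat.zero_add] at h2
  -- 4(q-1)u ≡ 4(q-1)s [MOD 4n]  ⇒ u = s
  have h8 : 8 * u.val ≡ 8 * s.val [MOD 4 * n] := by
    have hq4 : 4 * (q - 1) + 8 = 16 * n := by have := S.hn4; have := S.q3; omega
    have hz : ∀ v : ZMod n, 4 * (q - 1) * v.val + 8 * v.val ≡ 0 [MOD 4 * n] := by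
      intro v
      apply (Nat.modEq_zero_iff_dvd).mpr
      exact ⟨4 * v.val, by rw [show 4 * (q - 1) * v.val + 8 * v.val = (4 * (q - 1) + 8) * v.val
        from by ring, hq4]; ring⟩
    calc 8 * u.val = 8 * u.val + 0 := by rw [Nat.add_zero]
    _ ≡ 8 * u.val + (4 * (q - 1) * s.val + 8 * s.val) [MOD 4 * n] :=
          Nat.ModEq.add_left _ (hz s).symm
    _ = 4 * (q - 1) * s.val + (8 * u.val + 8 * s.val) := by ring
    _ ≡ 4 * (q - 1) * u.val + (8 * u.val + 8 * s.val) [MOD 4 * n] :=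
          Nat.ModEq.add_right _ h2.symm
    _ = (4 * (q - 1) * u.val + 8 * u.val) + 8 * s.val := by ring
    _ ≡ 0 + 8 * s.val [MOD 4 * n] := Nat.ModEq.add_right _ (hz u)
    _ = 8 * s.val := by rw [Nat.zero_add]
  have h9 : 2 * u.val ≡ 2 * s.val [MOD n] := by
    have h10 : 4 * (2 * u.val) ≡ 4 * (2 * s.val) [MOD 4 * n] := by
      rw [show 4 * (2 * u.val) = 8 * u.val from by ring,
        show 4 * (2 * s.val) = 8 * s.val from by ring]
      exact h8
    exact Nat.ModEq.mul_left_cancel' (by norm_num) h10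
  have h11 : u.val ≡ s.val [MOD n] := by
    apply Nat.ModEq.cancel_left_of_coprime _ h9
    have hd1 := Nat.gcd_dvd_left n 2
    rcases (Nat.dvd_prime Nat.prime_two).mp (Nat.gcd_dvd_right n 2) with h | h
    · exact h
    · exfalso
      rw [h] at hd1
      obtain ⟨j, hj⟩ := hd1
      have := S.hodd
      omega
  exact hsu (by
    have := Nat.ModEq.eq_of_lt_of_lt h11 (ZMod.val_lt u) (ZMod.val_lt s)
    exact (ZMod.val_injective n this).symm)

end Setup

/-- The subfield, as a finset: fixed points of the `q`-power map. -/
def SF (q : ℕ) (K : Type) [Field K] [Fintype K] [DecidableEq K] : Finset K :=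
  Finset.univ.filter (fun z => z ^ q = z)

lemma mem_SF {q : ℕ} {K : Type} [Field K] [Fintype K] [DecidableEq K] {z : K} :
    z ∈ SF q K ↔ z ^ q = z := by
  unfold SF
  simp

namespace Setup

variable (S : Setup K p k q n w)
include S

lemma sum_sgn_SF : ∑ z ∈ SF q K, sgn q z = 0 := by
  have hmuS := S.mu_S
  have hmune := S.mu_ne
  have hswap : ∑ z ∈ SF q K, sgn q z =
      ∑ z ∈ SF q K, sgn q ((w : K) ^ (q + 1) * z) := by
    apply Finset.sum_nbij' (i := fun z => ((w : K) ^ (q + 1))⁻¹ * z)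
      (j := fun z => (w : K) ^ (q + 1) * z)
    · intro a ha
      rw [mem_SF] at ha ⊢
      rw [mul_pow, inv_pow, hmuS, ha]
    · intro a ha
      rw [mem_SF] at ha ⊢
      rw [mul_pow, hmuS, ha]
    · intro a _
      rw [mul_inv_cancel_left₀ hmune]
    · intro a _
      rw [inv_mul_cancel_left₀ hmune]
    · intro a _
      rw [mul_inv_cancel_left₀ hmune]
  have hpt : ∀ z ∈ SF q K, sgn q ((w : K) ^ (q + 1) * z) = -sgn q z := by
    intro z hz
    rw [sgn_mul S.q1 S.hhalf S.ne1 hmuS (mem_SF.mp hz), S.sgn_mu]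
    ring
  rw [Finset.sum_congr rfl hpt, Finset.sum_neg_distrib] at hswap
  omega

lemma sum_sgn_smul {U : K} (hU : U ^ q = U) (hU0 : U ≠ 0) :
    ∑ z ∈ SF q K, sgn q (z * U) = 0 := by
  have h1 : ∀ z ∈ SF q K, sgn q (z * U) = sgn q z * sgn q U := fun z hz =>
    sgn_mul S.q1 S.hhalf S.ne1 (mem_SF.mp hz) hU
  rw [Finset.sum_congr rfl h1, ← Finset.sum_mul, S.sum_sgn_SF, zero_mul]

lemma cramer (th x y z : K) :
    Dp q th x y * z = Dp q th z y * x + Dp q th x z * y := by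
  unfold Dp
  ring

/-- The two-point character sum over the whole field vanishes. -/
lemma sum_K_eq_zero {x y : K} (hxy : Dp q ((w : K) ^ (2 * n)) x y ≠ 0) :
    ∑ z : K, sgn q (Dp q ((w : K) ^ (2 * n)) x z) * sgn q (Dp q ((w : K) ^ (2 * n)) y z)
      = 0 := by
  set th := (w : K) ^ (2 * n) with hth
  have hyx : Dp q th y x ≠ 0 := by
    rw [Dp_skew]
    exact neg_ne_zero.mpr hxy
  have hDS : ∀ a b : K, (Dp q th a b) ^ q = Dp q th a b := S.DS
  have step1 : ∑ z : K, sgn q (Dp q th x z) * sgn q (Dp q th y z) =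
      ∑ ab ∈ (SF q K) ×ˢ (SF q K),
        sgn q (Dp q th x (ab.1 * x + ab.2 * y)) * sgn q (Dp q th y (ab.1 * x + ab.2 * y)) := by
    symm
    apply Finset.sum_nbij' (i := fun ab => ab.1 * x + ab.2 * y)
      (j := fun z => (Dp q th z y * (Dp q th x y)⁻¹, Dp q th z x * (Dp q th y x)⁻¹))
    · intro a _
      exact Finset.mem_univ _
    · intro z _
      rw [Finset.mem_product, mem_SF, mem_SF]
      constructor
      · rw [mul_pow, inv_pow, hDS, hDS]
      · rw [mul_pow, inv_pow, hDS, hDS]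
    · -- j (i ab) = ab
      intro ab hab
      rw [Finset.mem_product, mem_SF, mem_SF] at hab
      have h1 : Dp q th (ab.1 * x + ab.2 * y) y = ab.1 * Dp q th x y := by
        rw [show Dp q th (ab.1 * x + ab.2 * y) y = -(Dp q th y (ab.1 * x + ab.2 * y))
            from by rw [Dp_skew],
          Dp_add_right S.hadd, Dp_smul_right hab.1, Dp_smul_right hab.2, Dp_self]
        rw [show Dp q th y x = -(Dp q th x y) from by rw [Dp_skew]]
        ring
      have h2 : Dp q th (ab.1 * x + ab.2 * y) x = ab.2 * Dp q th y x := by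
        rw [show Dp q th (ab.1 * x + ab.2 * y) x = -(Dp q th x (ab.1 * x + ab.2 * y))
            from by rw [Dp_skew],
          Dp_add_right S.hadd, Dp_smul_right hab.1, Dp_smul_right hab.2, Dp_self]
        rw [show Dp q th x y = -(Dp q th y x) from by rw [Dp_skew]]
        ring
      rw [h1, h2]
      ext
      · simp only
        rw [mul_inv_cancel_right₀ hxy]
      · simp only
        rw [mul_inv_cancel_right₀ hyx]
    · -- i (j z) = z
      intro z _
      simp only
      have hc := S.cramer th x y z
      rw [show Dp q th z x = -(Dp q th x z) from by rw [Dp_skew _ _],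
        show Dp q th y x = -(Dp q th x y) from by rw [Dp_skew _ _], inv_neg]
      field_simp
      linear_combination -hc
    · intro ab _
      rfl
  rw [step1]
  have step2 : ∀ ab ∈ (SF q K) ×ˢ (SF q K),
      sgn q (Dp q th x (ab.1 * x + ab.2 * y)) * sgn q (Dp q th y (ab.1 * x + ab.2 * y)) =
      (sgn q (ab.2 * Dp q th x y)) * (sgn q (ab.1 * Dp q th y x)) := by
    intro ab hab
    rw [Finset.mem_product, mem_SF, mem_SF] at hab
    simp only [Dp_add_right S.hadd, Dp_smul_right hab.1, Dp_smul_right hab.2, Dp_self,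
      mul_zero, zero_add, add_zero]
  rw [Finset.sum_congr rfl step2, Finset.sum_product]
  have step3 : ∀ a ∈ SF q K,
      ∑ b ∈ SF q K, (sgn q (b * Dp q th x y)) * (sgn q (a * Dp q th y x)) = 0 := by
    intro a _
    rw [← Finset.sum_mul, S.sum_sgn_smul (hDS x y) hxy, zero_mul]
  rw [Finset.sum_congr rfl step3, Finset.sum_const, smul_zero]

end Setup

/-- The four exponent offsets. -/
def ecn (q n : ℕ) : Fin 4 → ℕ := ![0, 2 * n, 1, q]

@[simp] lemma ecn_0 {q n : ℕ} : ecn q n 0 = 0 := rfl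
@[simp] lemma ecn_1 {q n : ℕ} : ecn q n 1 = 2 * n := rfl
@[simp] lemma ecn_2 {q n : ℕ} : ecn q n 2 = 1 := rfl
@[simp] lemma ecn_3 {q n : ℕ} : ecn q n 3 = q := rfl

namespace Setup

variable (S : Setup K p k q n w)
include S

lemma ecn_mod4 (b : Fin 4) : ecn q n b % 4 = ![0, 2, 1, 3] b := by
  have h1 := S.hn4
  have h2 := S.hodd
  fin_cases b <;> simp [ecn] <;> omega

lemma cancel_uv [NeZero n] {u u' : ZMod n}
    (h2 : 4 * (q - 1) * u.val ≡ 4 * (q - 1) * u'.val [MOD 4 * n]) : u = u' := by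
  have h8 : 8 * u.val ≡ 8 * u'.val [MOD 4 * n] := by
    have hq4 : 4 * (q - 1) + 8 = 16 * n := by have := S.hn4; have := S.q3; omega
    have hz : ∀ v : ZMod n, 4 * (q - 1) * v.val + 8 * v.val ≡ 0 [MOD 4 * n] := by
      intro v
      apply (Nat.modEq_zero_iff_dvd).mpr
      exact ⟨4 * v.val, by rw [show 4 * (q - 1) * v.val + 8 * v.val = (4 * (q - 1) + 8) * v.val
        from by ring, hq4]; ring⟩
    calc 8 * u.val = 8 * u.val + 0 := by rw [Nat.add_zero]
    _ ≡ 8 * u.val + (4 * (q - 1) * u'.val + 8 * u'.val) [MOD 4 * n] :=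
          Nat.ModEq.add_left _ (hz u').symm
    _ = 4 * (q - 1) * u'.val + (8 * u.val + 8 * u'.val) := by ring
    _ ≡ 4 * (q - 1) * u.val + (8 * u.val + 8 * u'.val) [MOD 4 * n] :=
          Nat.ModEq.add_right _ h2.symm
    _ = (4 * (q - 1) * u.val + 8 * u.val) + 8 * u'.val := by ring
    _ ≡ 0 + 8 * u'.val [MOD 4 * n] := Nat.ModEq.add_right _ (hz u)
    _ = 8 * u'.val := by rw [Nat.zero_add]
  have h9 : 2 * u.val ≡ 2 * u'.val [MOD n] := by
    have h10 : 4 * (2 * u.val) ≡ 4 * (2 * u'.val) [MOD 4 * n] := by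
      rw [show 4 * (2 * u.val) = 8 * u.val from by ring,
        show 4 * (2 * u'.val) = 8 * u'.val from by ring]
      exact h8
    exact Nat.ModEq.mul_left_cancel' (by norm_num) h10
  have h11 : u.val ≡ u'.val [MOD n] := by
    apply Nat.ModEq.cancel_left_of_coprime _ h9
    have hd1 := Nat.gcd_dvd_left n 2
    rcases (Nat.dvd_prime Nat.prime_two).mp (Nat.gcd_dvd_right n 2) with h | h
    · exact h
    · exfalso
      rw [h] at hd1
      obtain ⟨j, hj⟩ := hd1
      have := S.hodd
      omega
  exact ZMod.val_injective n (Nat.ModEq.eq_of_lt_of_lt h11 (ZMod.val_lt u) (ZMod.val_lt u'))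

lemma phi_inj [NeZero n] [NeZero (q - 1)] : Function.Injective
    (fun bum : Fin 4 × ZMod n × ZMod (q - 1) =>
      w ^ (ecn q n bum.1 + 4 * (q - 1) * bum.2.1.val + (q + 1) * bum.2.2.val)) := by
  rintro ⟨b, u, m⟩ ⟨b', u', m'⟩ hbum
  simp only at hbum
  have hE := (S.pow_iff _ _).mp hbum
  have hdvd4n : (4 * n : ℕ) ∣ (q ^ 2 - 1) := by
    rw [S.cardM]; exact ⟨q - 1, by ring⟩
  have hmod4n := Nat.ModEq.of_dvd hdvd4n hE
  -- kill the (q+1) m terms mod 4n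
  have hkill : ∀ mm : ZMod (q - 1), (q + 1) * mm.val ≡ 0 [MOD 4 * n] :=
    fun mm => (Nat.modEq_zero_iff_dvd).mpr ⟨mm.val, by rw [S.hn4]⟩
  have h1 : ecn q n b + 4 * (q - 1) * u.val ≡ ecn q n b' + 4 * (q - 1) * u'.val
      [MOD 4 * n] := by
    calc ecn q n b + 4 * (q - 1) * u.val
        = (ecn q n b + 4 * (q - 1) * u.val) + 0 := by ring
    _ ≡ ecn q n b + 4 * (q - 1) * u.val + (q + 1) * m.val [MOD 4 * n] :=
        Nat.ModEq.add_left _ (hkill m).symm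
    _ ≡ ecn q n b' + 4 * (q - 1) * u'.val + (q + 1) * m'.val [MOD 4 * n] := hmod4n
    _ ≡ ecn q n b' + 4 * (q - 1) * u'.val + 0 [MOD 4 * n] :=
        Nat.ModEq.add_left _ (hkill m')
    _ = ecn q n b' + 4 * (q - 1) * u'.val := by ring
  -- mod 4 : b = b'
  have h4 : ecn q n b ≡ ecn q n b' [MOD 4] := by
    have hmod4 := Nat.ModEq.of_dvd ⟨n, rfl⟩ h1
    have hz4 : ∀ v : ZMod n, 4 * (q - 1) * v.val ≡ 0 [MOD 4] :=
      fun v => (Nat.modEq_zero_iff_dvd).mpr ⟨(q - 1) * v.val, by ring⟩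
    calc ecn q n b = ecn q n b + 0 := by ring
    _ ≡ ecn q n b + 4 * (q - 1) * u.val [MOD 4] := Nat.ModEq.add_left _ (hz4 u).symm
    _ ≡ ecn q n b' + 4 * (q - 1) * u'.val [MOD 4] := hmod4
    _ ≡ ecn q n b' + 0 [MOD 4] := Nat.ModEq.add_left _ (hz4 u')
    _ = ecn q n b' := by ring
  have hbb : b = b' := by
    have hm1 := S.ecn_mod4 b
    have hm2 := S.ecn_mod4 b'
    have h4' : ecn q n b % 4 = ecn q n b' % 4 := h4
    rw [hm1, hm2] at h4'
    fin_cases b <;> fin_cases b' <;> simp_all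
  subst hbb
  have huu : u = u' := S.cancel_uv (Nat.ModEq.add_left_cancel' _ h1)
  subst huu
  have hmm : m = m' := by
    have h5 := Nat.ModEq.add_left_cancel' (ecn q n b + 4 * (q - 1) * u.val) (by
      calc ecn q n b + 4 * (q - 1) * u.val + (q + 1) * m.val
          ≡ ecn q n b + 4 * (q - 1) * u.val + (q + 1) * m'.val [MOD q ^ 2 - 1] := hE)
    have h6 : (q + 1) * m.val ≡ (q + 1) * m'.val [MOD (q + 1) * (q - 1)] := by
      rw [← S.factor]
      exact h5
    have h7 := Nat.ModEq.mul_left_cancel' (by have := S.q3; omega) h6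
    exact ZMod.val_injective _ (Nat.ModEq.eq_of_lt_of_lt h7 (ZMod.val_lt m) (ZMod.val_lt m'))
  rw [hmm]

lemma sum_over_units [NeZero n] [NeZero (q - 1)] (s t : ZMod n) :
    ∑ z : Kˣ, sgn q (Dp q ((w : K) ^ (2 * n)) ((pwel q n w s : Kˣ) : K) ((z : Kˣ) : K)) *
      sgn q (Dp q ((w : K) ^ (2 * n)) ((pwel q n w t : Kˣ) : K) ((z : Kˣ) : K)) =
    ((q - 1 : ℕ) : ℤ) * ∑ b : Fin 4, ∑ u : ZMod n,
      efn q n w (ecn q n b) s u * efn q n w (ecn q n b) t u := by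
  set th := (w : K) ^ (2 * n) with hth
  set φ := fun bum : Fin 4 × ZMod n × ZMod (q - 1) =>
      w ^ (ecn q n bum.1 + 4 * (q - 1) * bum.2.1.val + (q + 1) * bum.2.2.val) with hphi
  have hbij : Function.Bijective φ := by
    rw [Fintype.bijective_iff_injective_and_card]
    refine ⟨S.phi_inj, ?_⟩
    rw [Fintype.card_prod, Fintype.card_prod, ZMod.card, ZMod.card, Fintype.card_fin,
      Fintype.card_units, S.hcard, S.cardM]
    ring
  have hterm : ∀ bum : Fin 4 × ZMod n × ZMod (q - 1),
      sgn q (Dp q th ((pwel q n w s : Kˣ) : K) ((φ bum : Kˣ) : K)) *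
      sgn q (Dp q th ((pwel q n w t : Kˣ) : K) ((φ bum : Kˣ) : K)) =
      efn q n w (ecn q n bum.1) s bum.2.1 * efn q n w (ecn q n bum.1) t bum.2.1 := by
    rintro ⟨b, u, m⟩
    have hphiK : ((φ (b, u, m) : Kˣ) : K) =
        (((w : K) ^ (q + 1)) ^ m.val) * ((w : K) ^ (ecn q n b) * ((pwel q n w u : Kˣ) : K)) := by
      rw [hphi]
      simp only
      rw [S.valpow, S.pwK_eq, pow_add, pow_add, ← pow_mul]
      ring
    have hlamS : (((w : K) ^ (q + 1)) ^ m.val) ^ q = ((w : K) ^ (q + 1)) ^ m.val := by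
      rw [pow_right_comm, S.mu_S]
    have hlamne : ((w : K) ^ (q + 1)) ^ m.val ≠ 0 := pow_ne_zero _ S.mu_ne
    rw [hphiK, Dp_smul_right hlamS, Dp_smul_right hlamS,
      sgn_mul S.q1 S.hhalf S.ne1 hlamS (S.DS _ _),
      sgn_mul S.q1 S.hhalf S.ne1 hlamS (S.DS _ _)]
    unfold efn
    rw [← hth, mul_mul_mul_comm, sgn_sq (q := q) hlamne, one_mul]
  rw [← Fintype.sum_bijective φ hbij _ _ (fun bum => (hterm bum).symm),
    Fintype.sum_prod_type, Finset.mul_sum]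
  refine Finset.sum_congr rfl fun b _ => ?_
  rw [Fintype.sum_prod_type, Finset.mul_sum]
  refine Finset.sum_congr rfl fun u _ => ?_
  simp only
  rw [Finset.sum_const, Finset.card_univ, ZMod.card, nsmul_eq_mul]

end Setup

lemma sum_units_eq_sum {K : Type} [Field K] [Fintype K] [DecidableEq K] {f : K → ℤ}
    (h0 : f 0 = 0) : ∑ z : Kˣ, f (z : K) = ∑ z : K, f z := by
  rw [← Finset.sum_erase Finset.univ h0]
  apply Finset.sum_nbij' (i := fun z : Kˣ => (z : K))
    (j := fun z => if h : z = 0 then 1 else Units.mk0 z h)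
  · intro a _
    exact Finset.mem_erase.mpr ⟨Units.ne_zero a, Finset.mem_univ _⟩
  · intro a _
    exact Finset.mem_univ _
  · intro a _
    rw [dif_neg (Units.ne_zero a)]
    exact Units.ext rfl
  · intro a ha
    rw [dif_neg (Finset.mem_erase.mp ha).1, Units.val_mk0]
  · intro a _
    rfl

namespace Setup

variable (S : Setup K p k q n w)
include S

lemma int_sq {z : ℤ} (h0 : z ≠ 0) (hv : z = 0 ∨ z = 1 ∨ z = -1) : z * z = 1 := by
  rcases hv with h | h | h <;> first | (exact absurd h h0) | (rw [h]; norm_num)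

lemma ef_vals (c : ℕ) (s u : ZMod n) [NeZero n] :
    efn q n w c s u = 0 ∨ efn q n w c s u = 1 ∨ efn q n w c s u = -1 := sgn_vals _

lemma P_diag [NeZero n] (s : ZMod n) :
    ∑ b : Fin 4, ∑ u : ZMod n,
      efn q n w (ecn q n b) s u * efn q n w (ecn q n b) s u = (q : ℤ) := by
  rw [Fin.sum_univ_four]
  simp only [ecn_0, ecn_1, ecn_2, ecn_3]
  have hone : ∀ c : ℕ, (∀ u : ZMod n, efn q n w c s u ≠ 0) →
      ∑ u : ZMod n, efn q n w c s u * efn q n w c s u = (n : ℤ) := by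
    intro c hc
    rw [Finset.sum_congr rfl (fun u _ => S.int_sq (hc u) (S.ef_vals c s u)),
      Finset.sum_const, Finset.card_univ, ZMod.card, nsmul_eq_mul, mul_one]
  have h0sum : ∑ u : ZMod n, efn q n w 0 s u * efn q n w 0 s u = (n : ℤ) - 1 := by
    have hpt : ∀ u ∈ Finset.univ, efn q n w 0 s u * efn q n w 0 s u =
        1 - (if s = u then 1 else 0) := by
      intro u _
      by_cases h : s = u
      · rw [if_pos h, ← h, S.ef_diag]
        norm_num
      · rw [if_neg h, S.int_sq (S.efA_ne h) (S.ef_vals 0 s u)]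
        norm_num
    rw [Finset.sum_congr rfl hpt, Finset.sum_sub_distrib, Finset.sum_const,
      Finset.card_univ, ZMod.card, Finset.sum_ite_eq, if_pos (Finset.mem_univ s),
      nsmul_eq_mul, mul_one]
  rw [h0sum, hone (2 * n) (S.efB_ne s), hone 1 (S.efC_ne s), hone q (S.efD_ne s)]
  have hc : (q : ℤ) + 1 = 4 * (n : ℤ) := by exact_mod_cast S.hn4
  omega

lemma P_offdiag [NeZero n] {s t : ZMod n} (hst : s ≠ t) :
    ∑ b : Fin 4, ∑ u : ZMod n,
      efn q n w (ecn q n b) s u * efn q n w (ecn q n b) t u = 0 := by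
  haveI : NeZero (q - 1) := ⟨by have := S.q3; omega⟩
  have hDpne : Dp q ((w : K) ^ (2 * n)) ((pwel q n w s : Kˣ) : K)
      ((pwel q n w t : Kˣ) : K) ≠ 0 := by
    intro h
    apply S.efA_ne hst
    unfold efn
    rw [pow_zero, one_mul, h, sgn_zero]
  have hK := S.sum_K_eq_zero hDpne
  have hU := sum_units_eq_sum
    (f := fun z => sgn q (Dp q ((w : K) ^ (2 * n)) ((pwel q n w s : Kˣ) : K) z) *
      sgn q (Dp q ((w : K) ^ (2 * n)) ((pwel q n w t : Kˣ) : K) z))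
    (by rw [Dp_zero_right S.q1, sgn_zero, zero_mul])
  have hsou := S.sum_over_units s t
  have hzero : ((q - 1 : ℕ) : ℤ) * (∑ b : Fin 4, ∑ u : ZMod n,
      efn q n w (ecn q n b) s u * efn q n w (ecn q n b) t u) = 0 := by
    rw [← hsou, hU, hK]
  rcases mul_eq_zero.mp hzero with h | h
  · exfalso
    have := S.q3
    have h2 : ((q - 1 : ℕ) : ℤ) ≠ 0 := Int.natCast_ne_zero.mpr (by omega)
    exact h2 h
  · exact h

end Setup

end C

theorem construction {K : Type} [Field K] [Fintype K] [DecidableEq K] {p k q n : ℕ} [NeZero n]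
    {w : Kˣ} [CharP K p] (S : Setup K p k q n w) :
    ∃ A B C D : Matrix (ZMod n) (ZMod n) ℤ,
      IsCirculant A ∧ IsCirculant B ∧ IsCirculant C ∧ IsCirculant D ∧
      (∀ i j, A i j = 1 ∨ A i j = -1) ∧ (∀ i j, B i j = 1 ∨ B i j = -1) ∧
      (∀ i j, C i j = 1 ∨ C i j = -1) ∧ (∀ i j, D i j = 1 ∨ D i j = -1) ∧
      A * Aᵀ + B * Bᵀ + C * Cᵀ + D * Dᵀ = ((4 * n : ℕ) : ℤ) • 1 ∧
      A + Aᵀ = (2 : ℤ) • 1 ∧ Bᵀ = B ∧ C = D := by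
  have hpm : ∀ (c : ℕ) (s u : ZMod n), efn q n w c s u ≠ 0 →
      (efn q n w c s u = 1 ∨ efn q n w c s u = -1) := by
    intro c s u hne
    rcases S.ef_vals c s u with h | h | h
    · exact absurd h hne
    · exact Or.inl h
    · exact Or.inr h
  refine ⟨Matrix.of fun s t => if s = t then 1 else efn q n w 0 s t,
    Matrix.of fun s t => efn q n w (2 * n) s t,
    Matrix.of fun s t => efn q n w 1 s t,
    Matrix.of fun s t => efn q n w 1 s t,
    ?_, ?_, ?_, ?_, ?_, ?_, ?_, ?_, ?_, ?_, ?_, rfl⟩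
  · -- circulant A
    intro i j kk
    simp only [Matrix.of_apply]
    by_cases h : i = j
    · rw [if_pos (by rw [h]), if_pos h]
    · rw [if_neg (by intro hc; exact h (by
        have := add_left_injective kk hc
        exact this)), if_neg h, S.ef_shift]
  · intro i j kk
    simp only [Matrix.of_apply]
    exact S.ef_shift _ i j kk
  · intro i j kk
    simp only [Matrix.of_apply]
    exact S.ef_shift _ i j kk
  · intro i j kk
    simp only [Matrix.of_apply]
    exact S.ef_shift _ i j kk
  · -- entries A
    intro i j
    simp only [Matrix.of_apply]
    by_cases h : i = j
    · rw [if_pos h]; left; rfl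
    · rw [if_neg h]; exact hpm 0 i j (S.efA_ne h)
  · intro i j
    exact hpm _ i j (S.efB_ne i j)
  · intro i j
    exact hpm _ i j (S.efC_ne i j)
  · intro i j
    exact hpm _ i j (S.efC_ne i j)
  · -- the Gram identity
    ext s t
    simp only [Matrix.add_apply, Matrix.mul_apply, Matrix.transpose_apply, Matrix.of_apply,
      Matrix.smul_apply, Matrix.one_apply, smul_eq_mul]
    have hsumA : ∑ u : ZMod n,
        (if s = u then (1 : ℤ) else efn q n w 0 s u) *
          (if t = u then (1 : ℤ) else efn q n w 0 t u) =
        (if s = t then 1 else 0) + ∑ u : ZMod n, efn q n w 0 s u * efn q n w 0 t u := by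
      have hAsp : ∀ s' u : ZMod n, (if s' = u then (1 : ℤ) else efn q n w 0 s' u) =
          (if s' = u then 1 else 0) + efn q n w 0 s' u := by
        intro s' u
        by_cases h : s' = u
        · rw [if_pos h, if_pos h, h, S.ef_diag, add_zero]
        · rw [if_neg h, if_neg h, zero_add]
      have hterm : ∀ u ∈ Finset.univ,
          (if s = u then (1 : ℤ) else efn q n w 0 s u) *
          (if t = u then (1 : ℤ) else efn q n w 0 t u) =
          (if s = u then (if t = u then (1 : ℤ) else 0) else 0) +
          ((if s = u then efn q n w 0 t u else 0) + (if t = u then efn q n w 0 s u else 0)) +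
          efn q n w 0 s u * efn q n w 0 t u := by
        intro u _
        rw [hAsp s u, hAsp t u]
        by_cases h1 : s = u <;> by_cases h2 : t = u <;>
          simp only [h1, h2, if_true, if_false, if_pos rfl, if_neg] <;> first
            | ring
            | (rw [if_pos h2]; ring)
            | (rw [if_neg h2]; ring)
      rw [Finset.sum_congr rfl hterm, Finset.sum_add_distrib, Finset.sum_add_distrib,
        Finset.sum_add_distrib, Finset.sum_ite_eq, Finset.sum_ite_eq, Finset.sum_ite_eq,
        if_pos (Finset.mem_univ s), if_pos (Finset.mem_univ s), if_pos (Finset.mem_univ t)]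
      have hskew : efn q n w 0 t s + efn q n w 0 s t = 0 := by
        rw [S.ef_skew t s]
        ring
      rw [show (if t = s then (1 : ℤ) else 0) = (if s = t then 1 else 0) from by
        by_cases h : s = t
        · rw [if_pos h, if_pos h.symm]
        · rw [if_neg h, if_neg (fun hc => h hc.symm)]]
      rw [hskew]
      ring
    have hqsum : ∑ u : ZMod n, efn q n w q s u * efn q n w q t u =
        ∑ u : ZMod n, efn q n w 1 s u * efn q n w 1 t u := by
      have h1 : ∀ u ∈ Finset.univ, efn q n w q s u * efn q n w q t u =
          efn q n w 1 u s * efn q n w 1 u t := by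
        intro u _
        rw [S.ef_m3 s u, S.ef_m3 t u]
        ring
      rw [Finset.sum_congr rfl h1]
      apply Finset.sum_nbij' (i := fun u => s + t - u) (j := fun u => s + t - u)
      · intro a _; exact Finset.mem_univ _
      · intro a _; exact Finset.mem_univ _
      · intro a _; ring
      · intro a _; ring
      · intro u _
        have hx := S.ef_shift 1 u s (t - u)
        have hy := S.ef_shift 1 u t (s - u)
        rw [show u + (t - u) = t from by ring, show s + (t - u) = s + t - u from by ring] at hx
        rw [show u + (s - u) = s from by ring, show t + (s - u) = s + t - u from by ring] at hy
        rw [← hx, ← hy]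
        ring
    have hP : (if s = t then (1 : ℤ) else 0) + ∑ b : Fin 4, ∑ u : ZMod n,
        efn q n w (ecn q n b) s u * efn q n w (ecn q n b) t u = (4 * n : ℕ) *
        (if s = t then (1 : ℤ) else 0) := by
      by_cases h : s = t
      · subst h
        rw [if_pos rfl, S.P_diag, mul_one]
        have hc : (q : ℤ) + 1 = 4 * (n : ℤ) := by exact_mod_cast S.hn4
        push_cast
        omega
      · rw [if_neg h, S.P_offdiag h, mul_zero, add_zero]
    rw [hsumA]
    rw [Fin.sum_univ_four] at hP
    simp only [ecn_0, ecn_1, ecn_2, ecn_3] at hP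
    rw [← hP, hqsum]
    ring
  · -- skew type
    ext s t
    simp only [Matrix.add_apply, Matrix.transpose_apply, Matrix.of_apply, Matrix.smul_apply,
      Matrix.one_apply, smul_eq_mul]
    by_cases h : s = t
    · rw [if_pos h, if_pos h.symm, if_pos h]
      norm_num
    · rw [if_neg h, if_neg (fun hc => h hc.symm), if_neg h, S.ef_skew t s]
      ring
  · -- B symmetric
    ext s t
    simp only [Matrix.transpose_apply, Matrix.of_apply]
    exact S.ef_bsym s t


end HadCons

/-- Let `q = 4n - 1` be a prime power with `q ≡ 3 (mod 8)`. Then there exist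
circulant `±1` matrices `A, B, C, D` of order `n` such that
`A·Aᵀ + B·Bᵀ + C·Cᵀ + D·Dᵀ = 4n·I`, `(I - A)ᵀ = -(I - A)` (i.e. `A + Aᵀ = 2·I`),
`Bᵀ = B` and `C = D`; consequently the Goethals–Seidel array built from them is a
(skew) Hadamard matrix of order `4n` of Goethals–Seidel type. -/
theorem exists_skew_hadamard_goethals_seidel (q n : ℕ) [NeZero n]
    (hq : IsPrimePow q) (hq8 : q % 8 = 3) (hn : q + 1 = 4 * n) :
    ∃ A B C D : Matrix (ZMod n) (ZMod n) ℤ,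
      IsCirculant A ∧ IsCirculant B ∧ IsCirculant C ∧ IsCirculant D ∧
      (∀ i j, A i j = 1 ∨ A i j = -1) ∧
      (∀ i j, B i j = 1 ∨ B i j = -1) ∧
      (∀ i j, C i j = 1 ∨ C i j = -1) ∧
      (∀ i j, D i j = 1 ∨ D i j = -1) ∧
      A * Aᵀ + B * Bᵀ + C * Cᵀ + D * Dᵀ =
        ((4 * n : ℕ) : ℤ) • (1 : Matrix (ZMod n) (ZMod n) ℤ) ∧
      ((1 : Matrix (ZMod n) (ZMod n) ℤ) - A)ᵀ = -((1 : Matrix (ZMod n) (ZMod n) ℤ) - A) ∧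
      Bᵀ = B ∧ C = D ∧
      (∀ p q', GSarray n A B C D p q' = 1 ∨ GSarray n A B C D p q' = -1) ∧
      GSarray n A B C D * (GSarray n A B C D)ᵀ =
        ((4 * n : ℕ) : ℤ) • (1 : Matrix (Fin 4 × ZMod n) (Fin 4 × ZMod n) ℤ) ∧
      GSarray n A B C D + (GSarray n A B C D)ᵀ =
        (2 : ℤ) • (1 : Matrix (Fin 4 × ZMod n) (Fin 4 × ZMod n) ℤ) := by
  classical
  obtain ⟨p, k, hpp, hk0, hpk⟩ := hq
  haveI hfp : Fact (Nat.Prime p) := ⟨Nat.prime_iff.mpr hpp⟩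
  letI : DecidableEq (GaloisField p (2 * k)) := Classical.decEq _
  letI : Fintype (GaloisField p (2 * k)) := Fintype.ofFinite _
  have hcard : Fintype.card (GaloisField p (2 * k)) = q ^ 2 := by
    rw [← Nat.card_eq_fintype_card, GaloisField.card p (2 * k) (by omega), ← hpk,
      show 2 * k = k * 2 from mul_comm 2 k, pow_mul]
  obtain ⟨w, hw⟩ := IsCyclic.exists_generator (α := (GaloisField p (2 * k))ˣ)
  have hord : orderOf w = q ^ 2 - 1 := by
    rw [orderOf_eq_card_of_forall_mem_zpowers hw, Nat.card_eq_fintype_card,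
      Fintype.card_units, hcard]
  have S : HadCons.Setup (GaloisField p (2 * k)) p k q n w :=
    ⟨Nat.prime_iff.mpr hpp, by omega, hpk.symm, hcard, hn, by omega,
      Nat.one_le_iff_ne_zero.mpr (NeZero.ne n), hord⟩
  obtain ⟨A, B, C, D, h1, h2, h3, h4, h5, h6, h7, h8, h9, h10, h11, h12⟩ :=
    HadCons.construction S
  have hskewform : ((1 : Matrix (ZMod n) (ZMod n) ℤ) - A)ᵀ =
      -((1 : Matrix (ZMod n) (ZMod n) ℤ) - A) := by
    rw [Matrix.transpose_sub, Matrix.transpose_one]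
    have hA : Aᵀ = (2 : ℤ) • (1 : Matrix (ZMod n) (ZMod n) ℤ) - A := by
      rw [← h10]; abel
    rw [hA, two_smul]
    abel
  exact ⟨A, B, C, D, h1, h2, h3, h4, h5, h6, h7, h8, h9, hskewform, h11, h12,
    GSaux.GS_entries h5 h6 h7 h8,
    GSaux.GS_mul h1 h2 h3 h4 h9,
    GSaux.GS_add h2 h3 h4 h10⟩
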